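/- Let B be a real d×d matrix and b(x) := Bx. Let A : ℝ^d → ℝ^{d×d} be bounded (‖A(x)‖ ≤ C₃) and Lipschitz (‖A(x) − A(y)‖ ≤ C₅|x − y|), and suppose there exist a matrix J and p₀ > 0 such that A(x) = J whenever |x| ≥ p₀. Define A_t(x) := e^{−tB} A(e^{tB} x). Then there exists C > 0 such that ‖A_t(x) − A_s(x)‖ ≤ C e^{C(|t| ∨ |s|)} |t − s| for all t, s ∈ ℝ and all x ∈ ℝ^d. -/

import Mathlib

set_option synthInstance.maxHeartbeats 1000000
set_option maxHeartbeats 1000000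
open Nat

section helpers

variable {E : Type*} [NormedAddCommGroup E] [NormedSpace ℝ E] [CompleteSpace E] [Nontrivial E]

lemma myNormExpLe (T : E →L[ℝ] E) : ‖NormedSpace.exp T‖ ≤ Real.exp ‖T‖ := by
  have h1 : ∀ n : ℕ, ‖(n !⁻¹ : ℝ) • T ^ n‖ ≤ (n !⁻¹ : ℝ) • ‖T‖ ^ n := by
    intro n
    rw [norm_smul ((n ! : ℝ)⁻¹) (T ^ n), smul_eq_mul, Real.norm_eq_abs, abs_inv,
      abs_of_nonneg (by positivity)]
    gcongr
    exact norm_pow_le T n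
  calc ‖NormedSpace.exp T‖ ≤ ∑' n : ℕ, ‖(n !⁻¹ : ℝ) • T ^ n‖ := by
        rw [NormedSpace.exp_eq_tsum ℝ]
        exact norm_tsum_le_tsum_norm (NormedSpace.norm_expSeries_summable' T)
    _ ≤ ∑' n : ℕ, (n !⁻¹ : ℝ) • ‖T‖ ^ n :=
        Summable.tsum_le_tsum h1 (NormedSpace.norm_expSeries_summable' T)
          (NormedSpace.expSeries_summable' (𝕂 := ℝ) (‖T‖))
    _ = Real.exp ‖T‖ := by rw [Real.exp_eq_exp_ℝ, NormedSpace.exp_eq_tsum ℝ]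

lemma myExpSmulDiff (B : E →L[ℝ] E) (t s : ℝ) :
    ‖NormedSpace.exp (t • B) - NormedSpace.exp (s • B)‖
      ≤ ‖B‖ * Real.exp (‖B‖ * max |t| |s|) * |t - s| := by
  set r := max |t| |s| with hr
  have hr0 : 0 ≤ r := le_trans (abs_nonneg t) (le_max_left _ _)
  have hconv : Convex ℝ (Set.Icc (-r) r) := convex_Icc _ _
  have key := hconv.norm_image_sub_le_of_norm_hasDerivWithin_le
    (f := fun u : ℝ => NormedSpace.exp (u • B))
    (f' := fun u : ℝ => NormedSpace.exp (u • B) * B)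
    (C := Real.exp (‖B‖ * r) * ‖B‖)
    (fun u _ => (_root_.hasDerivAt_exp_smul_const B u).hasDerivWithinAt)
    (fun u hu => by
      calc ‖NormedSpace.exp (u • B) * B‖ ≤ ‖NormedSpace.exp (u • B)‖ * ‖B‖ :=
            norm_mul_le _ _
        _ ≤ Real.exp (‖B‖ * r) * ‖B‖ := by
            gcongr
            refine (myNormExpLe _).trans (Real.exp_le_exp.mpr ?_)
            rw [norm_smul u B, Real.norm_eq_abs, mul_comm]
            gcongr
            exact abs_le.mpr ⟨hu.1, hu.2⟩)
    (x := s) (y := t)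
    (Set.mem_Icc.mpr ⟨neg_le_of_abs_le (le_max_right _ _), le_of_abs_le (le_max_right _ _)⟩)
    (Set.mem_Icc.mpr ⟨neg_le_of_abs_le (le_max_left _ _), le_of_abs_le (le_max_left _ _)⟩)
  calc ‖NormedSpace.exp (t • B) - NormedSpace.exp (s • B)‖
      ≤ Real.exp (‖B‖ * r) * ‖B‖ * ‖t - s‖ := key
    _ = ‖B‖ * Real.exp (‖B‖ * r) * |t - s| := by rw [Real.norm_eq_abs]; ring

lemma myExpCancel (B : E →L[ℝ] E) (t : ℝ) (x : E) :
    NormedSpace.exp ((-t) • B) (NormedSpace.exp (t • B) x) = x := by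
  have hc : Commute ((-t) • B) (t • B) :=
    ((Commute.refl B).smul_left (-t)).smul_right t
  letI : NormedAlgebra ℚ (E →L[ℝ] E) := NormedAlgebra.restrictScalars ℚ ℝ (E →L[ℝ] E)
  have h : NormedSpace.exp ((-t) • B) * NormedSpace.exp (t • B) = 1 := by
    rw [← NormedSpace.exp_add_of_commute hc, ← add_smul, neg_add_cancel, zero_smul,
      NormedSpace.exp_zero]
  calc NormedSpace.exp ((-t) • B) (NormedSpace.exp (t • B) x)
      = (NormedSpace.exp ((-t) • B) * NormedSpace.exp (t • B)) x := rfl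
    _ = x := by rw [h]; rfl

end helpers

/-- For a linear drift `b(x) = Bx` and a bounded Lipschitz matrix field
`A` that is constant outside a ball, the family `A_t(x) = e^{−tB} A(e^{tB} x)` is Lipschitz
in time: there is `C > 0` with `‖A_t(x) − A_s(x)‖ ≤ C e^{C(|t| ∨ |s|)} |t − s|`
for all `t, s ∈ ℝ` and `x ∈ ℝ^d`. -/
theorem stmt13 {d : ℕ} (hd : 1 ≤ d) (C₃ C₅ : ℝ) (hC₃ : 0 < C₃) (hC₅ : 0 < C₅)
    (B : EuclideanSpace ℝ (Fin d) →L[ℝ] EuclideanSpace ℝ (Fin d))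
    (A : EuclideanSpace ℝ (Fin d) →
      (EuclideanSpace ℝ (Fin d) →L[ℝ] EuclideanSpace ℝ (Fin d)))
    (hA : ∀ x, ‖A x‖ ≤ C₃)
    (hALip : ∀ x y, ‖A x - A y‖ ≤ C₅ * ‖x - y‖)
    (J : EuclideanSpace ℝ (Fin d) →L[ℝ] EuclideanSpace ℝ (Fin d))
    (p₀ : ℝ) (hp₀ : 0 < p₀)
    (hAconst : ∀ x : EuclideanSpace ℝ (Fin d), p₀ ≤ ‖x‖ → A x = J) :
    ∃ C > 0, ∀ (t s : ℝ) (x : EuclideanSpace ℝ (Fin d)),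
      ‖(NormedSpace.exp ((-t) • B)).comp (A (NormedSpace.exp (t • B) x))
        - (NormedSpace.exp ((-s) • B)).comp (A (NormedSpace.exp (s • B) x))‖
        ≤ C * Real.exp (C * max |t| |s|) * |t - s| := by
  haveI : Nonempty (Fin d) := Fin.pos_iff_nonempty.mp hd
  haveI : Nontrivial (EuclideanSpace ℝ (Fin d)) := by
    refine ⟨0, EuclideanSpace.single (Classical.arbitrary (Fin d)) 1, ?_⟩
    intro h
    have := congrArg (fun v => v (Classical.arbitrary (Fin d))) h.symm
    simp [EuclideanSpace.single] at this
  set E := EuclideanSpace ℝ (Fin d)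
  set K : ℝ := C₃ * ‖B‖ + C₅ * ‖B‖ * p₀ + 3 * ‖B‖ + 1 with hK
  have hKpos : 0 < K := by positivity
  refine ⟨K, hKpos, fun t s x => ?_⟩
  set r := max |t| |s| with hr
  have hr0 : 0 ≤ r := le_trans (abs_nonneg t) (le_max_left _ _)
  set gt := NormedSpace.exp (t • B) with hgt
  set gs := NormedSpace.exp (s • B) with hgs
  set gnt := NormedSpace.exp ((-t) • B) with hgnt
  set gns := NormedSpace.exp ((-s) • B) with hgns
  -- basic bounds
  have hexpt : ∀ u : ℝ, |u| ≤ r → ‖NormedSpace.exp (u • B)‖ ≤ Real.exp (‖B‖ * r) := by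
    intro u hu
    refine (myNormExpLe _).trans (Real.exp_le_exp.mpr ?_)
    rw [norm_smul u B, Real.norm_eq_abs, mul_comm]
    gcongr
  have hdiff : ‖gt - gs‖ ≤ ‖B‖ * Real.exp (‖B‖ * r) * |t - s| := myExpSmulDiff B t s
  have hdiffn : ‖gnt - gns‖ ≤ ‖B‖ * Real.exp (‖B‖ * r) * |t - s| := by
    have h := myExpSmulDiff B (-t) (-s)
    rw [abs_neg, abs_neg, neg_sub_neg, abs_sub_comm s t] at h
    exact h
  -- bound on ‖A (gt x) - A (gs x)‖
  have hΔ : ‖A (gt x) - A (gs x)‖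
      ≤ C₅ * ‖B‖ * p₀ * Real.exp (2 * (‖B‖ * r)) * |t - s| := by
    have hRHS : 0 ≤ C₅ * ‖B‖ * p₀ * Real.exp (2 * (‖B‖ * r)) * |t - s| := by positivity
    by_cases h1 : p₀ ≤ ‖gt x‖
    · by_cases h2 : p₀ ≤ ‖gs x‖
      · rw [hAconst _ h1, hAconst _ h2, sub_self, norm_zero]; exact hRHS
      · -- ‖gs x‖ < p₀
        have hx : ‖x‖ ≤ Real.exp (‖B‖ * r) * p₀ := by
          have : x = gns (gs x) := (myExpCancel B s x).symm
          rw [this]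
          calc ‖gns (gs x)‖ ≤ ‖gns‖ * ‖gs x‖ := (gns).le_opNorm _
            _ ≤ Real.exp (‖B‖ * r) * p₀ := by
                have h2' : ‖gs x‖ ≤ p₀ := le_of_not_ge h2
                have := hexpt (-s) (by rw [abs_neg, hr]; exact le_max_right _ _)
                exact mul_le_mul this h2' (norm_nonneg _) (Real.exp_nonneg _)
        calc ‖A (gt x) - A (gs x)‖ ≤ C₅ * ‖gt x - gs x‖ := hALip _ _
          _ = C₅ * ‖(gt - gs) x‖ := by rw [ContinuousLinearMap.sub_apply]
          _ ≤ C₅ * (‖gt - gs‖ * ‖x‖) := by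
              gcongr
              exact (gt - gs).le_opNorm x
          _ ≤ C₅ * ((‖B‖ * Real.exp (‖B‖ * r) * |t - s|) * (Real.exp (‖B‖ * r) * p₀)) := by
              gcongr
          _ = C₅ * ‖B‖ * p₀ * Real.exp (2 * (‖B‖ * r)) * |t - s| := by
              rw [two_mul, Real.exp_add]; ring
    · have hx : ‖x‖ ≤ Real.exp (‖B‖ * r) * p₀ := by
        have : x = gnt (gt x) := (myExpCancel B t x).symm
        rw [this]
        calc ‖gnt (gt x)‖ ≤ ‖gnt‖ * ‖gt x‖ := (gnt).le_opNorm _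
          _ ≤ Real.exp (‖B‖ * r) * p₀ := by
              have h1' : ‖gt x‖ ≤ p₀ := le_of_not_ge h1
              have := hexpt (-t) (by rw [abs_neg, hr]; exact le_max_left _ _)
              exact mul_le_mul this h1' (norm_nonneg _) (Real.exp_nonneg _)
      calc ‖A (gt x) - A (gs x)‖ ≤ C₅ * ‖gt x - gs x‖ := hALip _ _
        _ = C₅ * ‖(gt - gs) x‖ := by rw [ContinuousLinearMap.sub_apply]
        _ ≤ C₅ * (‖gt - gs‖ * ‖x‖) := by
            gcongr
            exact (gt - gs).le_opNorm x
        _ ≤ C₅ * ((‖B‖ * Real.exp (‖B‖ * r) * |t - s|) * (Real.exp (‖B‖ * r) * p₀)) := by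
            gcongr
        _ = C₅ * ‖B‖ * p₀ * Real.exp (2 * (‖B‖ * r)) * |t - s| := by
            rw [two_mul, Real.exp_add]; ring
  -- decomposition
  have hdecomp : gnt.comp (A (gt x)) - gns.comp (A (gs x))
      = (gnt - gns).comp (A (gt x)) + gns.comp (A (gt x) - A (gs x)) := by
    rw [ContinuousLinearMap.sub_comp, ContinuousLinearMap.comp_sub]
    abel
  rw [hdecomp]
  have hterm1 : ‖(gnt - gns).comp (A (gt x))‖
      ≤ (‖B‖ * Real.exp (‖B‖ * r) * |t - s|) * C₃ :=
    (ContinuousLinearMap.opNorm_comp_le _ _).trans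
      (mul_le_mul hdiffn (hA _) (norm_nonneg _) (by positivity))
  have hterm2 : ‖gns.comp (A (gt x) - A (gs x))‖
      ≤ Real.exp (‖B‖ * r) * (C₅ * ‖B‖ * p₀ * Real.exp (2 * (‖B‖ * r)) * |t - s|) :=
    (ContinuousLinearMap.opNorm_comp_le _ _).trans
      (mul_le_mul (hexpt (-s) (by rw [abs_neg, hr]; exact le_max_right _ _)) hΔ (norm_nonneg _)
        (Real.exp_nonneg _))
  have hsum := norm_add_le ((gnt - gns).comp (A (gt x))) (gns.comp (A (gt x) - A (gs x)))
  have hB3 : Real.exp (‖B‖ * r) ≤ Real.exp (3 * ‖B‖ * r) := by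
    apply Real.exp_le_exp.mpr
    nlinarith [norm_nonneg B, hr0]
  have hB3' : Real.exp (‖B‖ * r) * Real.exp (2 * (‖B‖ * r)) = Real.exp (3 * ‖B‖ * r) := by
    rw [← Real.exp_add]; ring_nf
  have e3 : Real.exp (3 * ‖B‖ * r) ≤ Real.exp (K * r) := by
    apply Real.exp_le_exp.mpr
    have h3K : 3 * ‖B‖ ≤ K := by rw [hK]; nlinarith [norm_nonneg B, mul_nonneg hC₃.le (norm_nonneg B), mul_nonneg (mul_nonneg hC₅.le (norm_nonneg B)) hp₀.le]
    exact mul_le_mul_of_nonneg_right h3K hr0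
  have e4 : C₃ * ‖B‖ + C₅ * ‖B‖ * p₀ ≤ K := by rw [hK]; nlinarith [norm_nonneg B, mul_nonneg hC₃.le (norm_nonneg B), mul_nonneg (mul_nonneg hC₅.le (norm_nonneg B)) hp₀.le]
  have hfinal : (‖B‖ * Real.exp (‖B‖ * r) * |t - s|) * C₃
      + Real.exp (‖B‖ * r) * (C₅ * ‖B‖ * p₀ * Real.exp (2 * (‖B‖ * r)) * |t - s|)
      ≤ K * Real.exp (K * r) * |t - s| := by
    have e1 : (‖B‖ * Real.exp (‖B‖ * r) * |t - s|) * C₃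
        ≤ C₃ * ‖B‖ * Real.exp (3 * ‖B‖ * r) * |t - s| := by
      calc (‖B‖ * Real.exp (‖B‖ * r) * |t - s|) * C₃
          = C₃ * ‖B‖ * Real.exp (‖B‖ * r) * |t - s| := by ring
        _ ≤ C₃ * ‖B‖ * Real.exp (3 * ‖B‖ * r) * |t - s| := by gcongr
    have e2 : Real.exp (‖B‖ * r) * (C₅ * ‖B‖ * p₀ * Real.exp (2 * (‖B‖ * r)) * |t - s|)
        = C₅ * ‖B‖ * p₀ * Real.exp (3 * ‖B‖ * r) * |t - s| := by
      rw [← hB3']; ring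
    have hmain : (C₃ * ‖B‖ + C₅ * ‖B‖ * p₀) * Real.exp (3 * ‖B‖ * r)
        ≤ K * Real.exp (K * r) :=
      mul_le_mul e4 e3 (Real.exp_nonneg _) hKpos.le
    calc (‖B‖ * Real.exp (‖B‖ * r) * |t - s|) * C₃
        + Real.exp (‖B‖ * r) * (C₅ * ‖B‖ * p₀ * Real.exp (2 * (‖B‖ * r)) * |t - s|)
        ≤ C₃ * ‖B‖ * Real.exp (3 * ‖B‖ * r) * |t - s|
          + C₅ * ‖B‖ * p₀ * Real.exp (3 * ‖B‖ * r) * |t - s| := by rw [e2]; linarith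
      _ = ((C₃ * ‖B‖ + C₅ * ‖B‖ * p₀) * Real.exp (3 * ‖B‖ * r)) * |t - s| := by ring
      _ ≤ (K * Real.exp (K * r)) * |t - s| :=
          mul_le_mul_of_nonneg_right hmain (abs_nonneg _)
      _ = K * Real.exp (K * r) * |t - s| := by ring
  linarith [hsum, hterm1, hterm2, hfinal]
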